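/- In a heavy-tailed linear SCM with positive coefficients, the tail of each variable satisfies P(X_j > x) ~ (Σ_{h ∈ An(j,G)} β_{h→j}^α) ℓ(x) x^{-α} as x → ∞. -/

import Mathlib

open MeasureTheory ProbabilityTheory Filter Topology

/-- `f ~ g` at infinity: the ratio tends to 1. -/
def Asymp (f g : ℝ → ℝ) : Prop := Tendsto (fun x => f x / g x) atTop (𝓝 1)

/-- A slowly varying function: eventually positive and `ℓ(cx)/ℓ(x) → 1` for all `c > 0`. -/
def SlowlyVarying (ℓ : ℝ → ℝ) : Prop :=
  (∀ᶠ x in atTop, 0 < ℓ x) ∧ ∀ c > 0, Tendsto (fun x => ℓ (c * x) / ℓ x) atTop (𝓝 1)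

/-- The (real-valued) upper tail probability function of `Y` under `μ`. -/
noncomputable def tailP {Ω : Type*} [MeasurableSpace Ω] (μ : Measure Ω) (Y : Ω → ℝ) (x : ℝ) : ℝ :=
  (μ {ω | x < Y ω}).toReal

/-- The distribution function of a real random variable `Y` under `μ`. -/
noncomputable def cdf' {Ω : Type*} [MeasurableSpace Ω] (μ : Measure Ω) (Y : Ω → ℝ) (x : ℝ) : ℝ :=
  (μ {ω | Y ω ≤ x}).toReal

set_option linter.unusedSectionVars false
set_option linter.unusedVariables false

section TailHelpers

variable {Ω : Type*} [MeasurableSpace Ω] {μ : Measure Ω} [IsProbabilityMeasure μ] {X Y : Ω → ℝ}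

lemma tailP_nonneg (x : ℝ) : 0 ≤ tailP μ Y x := ENNReal.toReal_nonneg

lemma tailP_le_one (x : ℝ) : tailP μ Y x ≤ 1 := by
  rw [tailP, ← ENNReal.toReal_one]
  exact ENNReal.toReal_mono ENNReal.one_ne_top (prob_le_one)

lemma tailP_antitone : Antitone (tailP μ Y) := by
  intro x y hxy
  exact ENNReal.toReal_mono (measure_ne_top μ _)
    (measure_mono (fun ω (h : y < Y ω) => lt_of_le_of_lt hxy h))

lemma tendsto_tailP_atTop (hY : Measurable Y) : Tendsto (tailP μ Y) atTop (𝓝 0) := by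
  have hnat : Tendsto (fun n : ℕ => tailP μ Y n) atTop (𝓝 0) := by
    have h1 : Tendsto (fun n : ℕ => μ {ω | (n : ℝ) < Y ω}) atTop
        (𝓝 (μ (⋂ n : ℕ, {ω | (n : ℝ) < Y ω}))) := by
      apply tendsto_measure_iInter_atTop
      · exact fun n => (measurableSet_lt measurable_const hY).nullMeasurableSet
      · intro m n hmn
        exact fun ω (h : (n:ℝ) < Y ω) => lt_of_le_of_lt (by exact_mod_cast hmn) h
      · exact ⟨0, measure_ne_top μ _⟩
    have h2 : (⋂ n : ℕ, {ω | (n : ℝ) < Y ω}) = (∅ : Set Ω) := by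
      ext ω
      simp only [Set.mem_iInter, Set.mem_setOf_eq, Set.mem_empty_iff_false, iff_false, not_forall,
        not_lt]
      obtain ⟨n, hn⟩ := exists_nat_ge (Y ω)
      exact ⟨n, hn⟩
    rw [h2, measure_empty] at h1
    have := (ENNReal.tendsto_toReal (by simp)).comp h1
    simpa [tailP, Function.comp_def] using this
  rw [Metric.tendsto_atTop] at hnat ⊢
  intro e he
  obtain ⟨N, hN⟩ := hnat e he
  refine ⟨N, fun x hx => ?_⟩
  have h1 : tailP μ Y x ≤ tailP μ Y N := tailP_antitone (by exact_mod_cast hx)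
  have h2 := hN N le_rfl
  rw [Real.dist_eq] at h2 ⊢
  rw [abs_lt] at h2 ⊢
  constructor
  · linarith [tailP_nonneg (μ := μ) (Y := Y) x]
  · linarith

lemma tendsto_tailP_atBot (hY : Measurable Y) : Tendsto (tailP μ Y) atBot (𝓝 1) := by
  have hnat : Tendsto (fun n : ℕ => tailP μ Y (-(n:ℝ))) atTop (𝓝 1) := by
    have h1 : Tendsto (fun n : ℕ => μ {ω | (-(n:ℝ)) < Y ω}) atTop
        (𝓝 (μ (⋃ n : ℕ, {ω | (-(n:ℝ)) < Y ω}))) := by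
      apply tendsto_measure_iUnion_atTop
      intro m n hmn
      exact fun ω (h : -(m:ℝ) < Y ω) => lt_of_le_of_lt (by simp; exact_mod_cast hmn) h
    have h2 : (⋃ n : ℕ, {ω | (-(n:ℝ)) < Y ω}) = (Set.univ : Set Ω) := by
      ext ω
      simp only [Set.mem_iUnion, Set.mem_setOf_eq, Set.mem_univ, iff_true]
      obtain ⟨n, hn⟩ := exists_nat_gt (-(Y ω))
      exact ⟨n, by linarith⟩
    rw [h2, measure_univ] at h1
    have := (ENNReal.tendsto_toReal (by simp)).comp h1
    simpa [tailP, Function.comp_def] using this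
  rw [Metric.tendsto_atTop] at hnat
  rw [Metric.tendsto_nhds]
  intro e he
  obtain ⟨N, hN⟩ := hnat e he
  rw [eventually_atBot]
  refine ⟨-(N:ℝ), fun x hx => ?_⟩
  have h1 : tailP μ Y (-(N:ℝ)) ≤ tailP μ Y x := tailP_antitone hx
  have h2 := hN N le_rfl
  rw [Real.dist_eq] at h2 ⊢
  rw [abs_lt] at h2 ⊢
  constructor
  · linarith [tailP_le_one (μ := μ) (Y := Y) x]
  · linarith [tailP_le_one (μ := μ) (Y := Y) x]

lemma indep_tail_mul (hmX : Measurable X) (hmY : Measurable Y) (hind : IndepFun X Y μ)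
    (s t : ℝ) :
    (μ ({ω | s < X ω} ∩ {ω | t < Y ω})).toReal = tailP μ X s * tailP μ Y t := by
  have h : μ (X ⁻¹' Set.Ioi s ∩ Y ⁻¹' Set.Ioi t) = μ (X ⁻¹' Set.Ioi s) * μ (Y ⁻¹' Set.Ioi t) :=
    hind.measure_inter_preimage_eq_mul _ _ measurableSet_Ioi measurableSet_Ioi
  have h2 : X ⁻¹' Set.Ioi s = {ω | s < X ω} := rfl
  have h3 : Y ⁻¹' Set.Ioi t = {ω | t < Y ω} := rfl
  rw [h2, h3] at h
  rw [tailP, tailP, h, ENNReal.toReal_mul]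

lemma tail_add_upper (hmX : Measurable X) (hmY : Measurable Y) (hind : IndepFun X Y μ)
    {δ : ℝ} (x : ℝ) (hδ : 0 < δ) :
    tailP μ (fun ω => X ω + Y ω) x ≤
      tailP μ X ((1 - δ) * x) + tailP μ Y ((1 - δ) * x) + tailP μ X (δ * x) * tailP μ Y (δ * x) := by
  have hsub : {ω | x < X ω + Y ω} ⊆
      {ω | (1 - δ) * x < X ω} ∪ {ω | (1 - δ) * x < Y ω} ∪
        ({ω | δ * x < X ω} ∩ {ω | δ * x < Y ω}) := by
    intro ω hω
    simp only [Set.mem_setOf_eq] at hω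
    by_cases h1 : (1 - δ) * x < X ω
    · exact Or.inl (Or.inl h1)
    by_cases h2 : (1 - δ) * x < Y ω
    · exact Or.inl (Or.inr h2)
    push_neg at h1 h2
    exact Or.inr ⟨show δ * x < X ω by nlinarith, show δ * x < Y ω by nlinarith⟩
  have hm := measure_mono (μ := μ) hsub
  have hm2 := le_trans hm (le_trans (measure_union_le _ _)
    (add_le_add (measure_union_le _ _) le_rfl))
  calc tailP μ (fun ω => X ω + Y ω) x
      ≤ (μ {ω | (1 - δ) * x < X ω} + μ {ω | (1 - δ) * x < Y ω} +
          μ ({ω | δ * x < X ω} ∩ {ω | δ * x < Y ω})).toReal := by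
        exact ENNReal.toReal_mono (by finiteness) hm2
    _ = tailP μ X ((1 - δ) * x) + tailP μ Y ((1 - δ) * x) +
          tailP μ X (δ * x) * tailP μ Y (δ * x) := by
        rw [ENNReal.toReal_add (by finiteness) (by finiteness),
          ENNReal.toReal_add (by finiteness) (by finiteness),
          indep_tail_mul hmX hmY hind]
        rfl

lemma tail_add_lower (hmX : Measurable X) (hmY : Measurable Y) (hind : IndepFun X Y μ)
    {δ : ℝ} (x : ℝ) (hδ : 0 < δ) :
    tailP μ X ((1 + δ) * x) * tailP μ Y (-(δ * x)) + tailP μ Y ((1 + δ) * x) * tailP μ X (-(δ * x))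
      - tailP μ X ((1 + δ) * x) * tailP μ Y ((1 + δ) * x)
      ≤ tailP μ (fun ω => X ω + Y ω) x := by
  set A := {ω | (1 + δ) * x < X ω} ∩ {ω | -(δ * x) < Y ω} with hA
  set B := {ω | (1 + δ) * x < Y ω} ∩ {ω | -(δ * x) < X ω} with hB
  have hsub : A ∪ B ⊆ {ω | x < X ω + Y ω} := by
    rintro ω (⟨h1, h2⟩ | ⟨h1, h2⟩) <;>
      · simp only [Set.mem_setOf_eq] at h1 h2 ⊢
        nlinarith
  have hAB : A ∩ B ⊆ {ω | (1 + δ) * x < X ω} ∩ {ω | (1 + δ) * x < Y ω} := by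
    rintro ω ⟨⟨h1, _⟩, ⟨h3, _⟩⟩
    exact ⟨h1, h3⟩
  have hmA : MeasurableSet A :=
    (measurableSet_lt measurable_const hmX).inter (measurableSet_lt measurable_const hmY)
  have key : μ A + μ B ≤ μ {ω | x < X ω + Y ω} +
      μ ({ω | (1 + δ) * x < X ω} ∩ {ω | (1 + δ) * x < Y ω}) := by
    rw [← measure_union_add_inter' (μ := μ) hmA B]
    exact add_le_add (measure_mono hsub) (measure_mono hAB)
  have keyR : (μ A).toReal + (μ B).toReal ≤ tailP μ (fun ω => X ω + Y ω) x +
      tailP μ X ((1 + δ) * x) * tailP μ Y ((1 + δ) * x) := by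
    rw [← indep_tail_mul hmX hmY hind, tailP, ← ENNReal.toReal_add (by finiteness) (by finiteness),
      ← ENNReal.toReal_add (by finiteness) (by finiteness)]
    exact ENNReal.toReal_mono (by finiteness) key
  have hAval : (μ A).toReal = tailP μ X ((1 + δ) * x) * tailP μ Y (-(δ * x)) :=
    indep_tail_mul hmX hmY hind _ _
  have hBval : (μ B).toReal = tailP μ Y ((1 + δ) * x) * tailP μ X (-(δ * x)) := by
    rw [mul_comm, hB, Set.inter_comm]
    exact indep_tail_mul hmX hmY hind _ _
  linarith [hAval ▸ hBval ▸ keyR]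

end TailHelpers

section GHelpers

variable {ℓ : ℝ → ℝ} {α : ℝ}

lemma tendsto_mul_atTop' {c : ℝ} (hc : 0 < c) : Tendsto (fun x : ℝ => c * x) atTop atTop :=
  Tendsto.const_mul_atTop hc tendsto_id

lemma g_pos (hℓ : SlowlyVarying ℓ) : ∀ᶠ x in atTop, 0 < ℓ x * x ^ (-α) := by
  filter_upwards [hℓ.1, eventually_gt_atTop 0] with x hl hx
  exact mul_pos hl (Real.rpow_pos_of_pos hx _)

lemma g_ratio (hℓ : SlowlyVarying ℓ) {c : ℝ} (hc : 0 < c) :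
    Tendsto (fun x => (ℓ (c * x) * (c * x) ^ (-α)) / (ℓ x * x ^ (-α))) atTop
      (𝓝 (c ^ (-α))) := by
  have h1 := hℓ.2 c hc
  have heq : ∀ᶠ x in atTop,
      (ℓ (c * x) * (c * x) ^ (-α)) / (ℓ x * x ^ (-α)) = (ℓ (c * x) / ℓ x) * c ^ (-α) := by
    filter_upwards [hℓ.1, eventually_gt_atTop 0] with x hl hx
    have hxne : x ^ (-α) ≠ 0 := (Real.rpow_pos_of_pos hx _).ne'
    rw [Real.mul_rpow hc.le hx.le]
    field_simp
  rw [tendsto_congr' heq]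
  simpa using h1.mul_const (c ^ (-α))

/-- If `tailP X ~ a·g` then `tailP X (c·x) / g x → a·c^(-α)`. -/
lemma tail_shift {Ω : Type*} [MeasurableSpace Ω] {μ : Measure Ω} {X : Ω → ℝ}
    (hℓ : SlowlyVarying ℓ) {a : ℝ} (ha : 0 < a)
    (hA : Asymp (tailP μ X) (fun x => a * (ℓ x * x ^ (-α)))) {c : ℝ} (hc : 0 < c) :
    Tendsto (fun x => tailP μ X (c * x) / (ℓ x * x ^ (-α))) atTop (𝓝 (a * c ^ (-α))) := by
  have h1 : Tendsto (fun x => tailP μ X (c * x) / (a * (ℓ (c * x) * (c * x) ^ (-α)))) atTop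
      (𝓝 1) := hA.comp (tendsto_mul_atTop' hc)
  have h2 := g_ratio (α := α) hℓ hc
  have h3 : Tendsto (fun x =>
      (tailP μ X (c * x) / (a * (ℓ (c * x) * (c * x) ^ (-α)))) *
        (a * ((ℓ (c * x) * (c * x) ^ (-α)) / (ℓ x * x ^ (-α))))) atTop
      (𝓝 (1 * (a * c ^ (-α)))) := h1.mul (h2.const_mul a)
  rw [one_mul] at h3
  refine h3.congr' ?_
  have hgc : ∀ᶠ x in atTop, 0 < ℓ (c * x) * (c * x) ^ (-α) :=
    (tendsto_mul_atTop' hc).eventually (g_pos (α := α) hℓ)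
  filter_upwards [hgc] with x hx
  field_simp
  rw [mul_assoc (tailP μ X (c * x)), mul_comm (tailP μ X (c * x)),
    mul_assoc (ℓ (c * x) * (c * x) ^ (-α)), mul_div_mul_left _ _ hx.ne']

/-- Base case: tail of `c·X`. -/
lemma tail_const_smul {Ω : Type*} [MeasurableSpace Ω] {μ : Measure Ω} {X : Ω → ℝ}
    (hℓ : SlowlyVarying ℓ)
    (hA : Asymp (tailP μ X) (fun x => ℓ x * x ^ (-α))) {c : ℝ} (hc : 0 < c) :
    Asymp (tailP μ (fun ω => c * X ω)) (fun x => c ^ α * (ℓ x * x ^ (-α))) := by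
  have hset : ∀ x : ℝ, {ω | x < c * X ω} = {ω | c⁻¹ * x < X ω} := by
    intro x; ext ω; simp only [Set.mem_setOf_eq]
    rw [inv_mul_lt_iff₀ hc]
  have hA' : Asymp (tailP μ X) (fun x => 1 * (ℓ x * x ^ (-α))) := by
    unfold Asymp at hA ⊢; simpa using hA
  have h1 := tail_shift hℓ one_pos hA' (inv_pos.mpr hc)
  have h2 : (1 : ℝ) * (c⁻¹) ^ (-α) = c ^ α := by
    rw [one_mul, Real.inv_rpow hc.le, Real.rpow_neg hc.le, inv_inv]
  have h3 := h1.div_const (c ^ α)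
  rw [h2, div_self (Real.rpow_pos_of_pos hc α).ne'] at h3
  refine h3.congr fun x => ?_
  show (tailP μ X (c⁻¹ * x) / (ℓ x * x ^ (-α))) / c ^ α
      = tailP μ (fun ω => c * X ω) x / (c ^ α * (ℓ x * x ^ (-α)))
  have hnum : tailP μ (fun ω => c * X ω) x = tailP μ X (c⁻¹ * x) := by
    rw [tailP, tailP, hset x]
  rw [hnum, div_div, mul_comm (ℓ x * x ^ (-α)) (c ^ α)]

lemma delta_choice (hα : 0 < α) {e : ℝ} (he : 0 < e) :
    ∃ δ : ℝ, 0 < δ ∧ δ < 1/2 ∧ (1 - δ) ^ (-α) < 1 + e/2 ∧ 1 - e/2 < (1 + δ) ^ (-α) := by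
  have hcont : ContinuousAt (fun t : ℝ => t ^ (-α)) 1 :=
    Real.continuousAt_rpow_const 1 (-α) (Or.inl one_ne_zero)
  have hone : (1 : ℝ) ^ (-α) = 1 := Real.one_rpow _
  have h1 : Tendsto (fun δ : ℝ => (1 - δ) ^ (-α)) (𝓝 0) (𝓝 1) := by
    have h : Tendsto (fun δ : ℝ => 1 - δ) (𝓝 0) (𝓝 1) := by
      have := ((continuous_const (y := (1:ℝ))).sub continuous_id).tendsto (0 : ℝ)
      simpa [Pi.sub_def, Pi.add_def] using this
    simpa [hone, Function.comp_def] using hcont.tendsto.comp h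
  have h2 : Tendsto (fun δ : ℝ => (1 + δ) ^ (-α)) (𝓝 0) (𝓝 1) := by
    have h : Tendsto (fun δ : ℝ => 1 + δ) (𝓝 0) (𝓝 1) := by
      have := ((continuous_const (y := (1:ℝ))).add continuous_id).tendsto (0 : ℝ)
      simpa [Pi.sub_def, Pi.add_def] using this
    simpa [hone, Function.comp_def] using hcont.tendsto.comp h
  have hev : ∀ᶠ δ : ℝ in 𝓝 0, (1 - δ) ^ (-α) < 1 + e/2 ∧ 1 - e/2 < (1 + δ) ^ (-α) :=
    (h1.eventually_lt_const (by linarith)).and (h2.eventually_const_lt (by linarith))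
  have hev2 : ∀ᶠ δ : ℝ in 𝓝[>] (0:ℝ), (1 - δ) ^ (-α) < 1 + e/2 ∧ 1 - e/2 < (1 + δ) ^ (-α) :=
    eventually_nhdsWithin_of_eventually_nhds hev
  have hev3 : ∀ᶠ δ : ℝ in 𝓝[>] (0:ℝ),
      0 < δ ∧ δ < 1/2 ∧ (1 - δ) ^ (-α) < 1 + e/2 ∧ 1 - e/2 < (1 + δ) ^ (-α) := by
    filter_upwards [hev2, self_mem_nhdsWithin,
      eventually_nhdsWithin_of_eventually_nhds (eventually_lt_nhds (by norm_num : (0:ℝ) < 1/2))]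
      with δ h hpos hlt
    exact ⟨hpos, hlt, h.1, h.2⟩
  exact hev3.exists

end GHelpers

section TwoVar

private lemma alg_up {g ab p q r s : ℝ} (hg : g ≠ 0) (hab : ab ≠ 0) :
    (p + q + r * s) / (ab * g) = (p / g + q / g + r * (s / g)) / ab := by
  rw [← mul_div_assoc, ← add_div, ← add_div, div_div, mul_comm g ab]

private lemma alg_lo {g ab p q u v : ℝ} (hg : g ≠ 0) (hab : ab ≠ 0) :
    ((p / g) * u + (q / g) * v - p * (q / g)) / ab = (p * u + q * v - p * q) / (ab * g) := by
  rw [div_mul_eq_mul_div, div_mul_eq_mul_div, ← mul_div_assoc, ← add_div,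
    div_sub_div_same, div_div, mul_comm g ab]

variable {ℓ : ℝ → ℝ} {α : ℝ}
variable {Ω : Type*} [MeasurableSpace Ω] {μ : Measure Ω} [IsProbabilityMeasure μ] {X Y : Ω → ℝ}

/-- The key two-variable lemma: tails of independent regularly varying variables add. -/
lemma tail_add (hmX : Measurable X) (hmY : Measurable Y) (hind : IndepFun X Y μ)
    (hℓ : SlowlyVarying ℓ) (hα : 0 < α) {a b : ℝ} (ha : 0 < a) (hb : 0 < b)
    (hA : Asymp (tailP μ X) (fun x => a * (ℓ x * x ^ (-α))))
    (hB : Asymp (tailP μ Y) (fun x => b * (ℓ x * x ^ (-α)))) :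
    Asymp (tailP μ (fun ω => X ω + Y ω)) (fun x => (a + b) * (ℓ x * x ^ (-α))) := by
  have hab : (0:ℝ) < a + b := by linarith
  rw [Asymp, Metric.tendsto_nhds]
  intro e he
  obtain ⟨δ, hδ0, hδh, hub, hlb⟩ := delta_choice (α := α) hα he
  have h1δ : (0:ℝ) < 1 - δ := by linarith
  have h1δ' : (0:ℝ) < 1 + δ := by linarith
  have hXu := tail_shift hℓ ha hA h1δ
  have hYu := tail_shift hℓ hb hB h1δ
  have hX0 : Tendsto (fun x => tailP μ X (δ * x)) atTop (𝓝 0) :=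
    (tendsto_tailP_atTop hmX).comp (tendsto_mul_atTop' hδ0)
  have hY3 := tail_shift hℓ hb hB hδ0
  have hXl := tail_shift hℓ ha hA h1δ'
  have hYl := tail_shift hℓ hb hB h1δ'
  have hX0' : Tendsto (fun x => tailP μ X ((1 + δ) * x)) atTop (𝓝 0) :=
    (tendsto_tailP_atTop hmX).comp (tendsto_mul_atTop' h1δ')
  have hneg : Tendsto (fun x : ℝ => -(δ * x)) atTop atBot :=
    tendsto_neg_atTop_atBot.comp (tendsto_mul_atTop' hδ0)
  have hYneg : Tendsto (fun x => tailP μ Y (-(δ * x))) atTop (𝓝 1) :=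
    (tendsto_tailP_atBot hmY).comp hneg
  have hXneg : Tendsto (fun x => tailP μ X (-(δ * x))) atTop (𝓝 1) :=
    (tendsto_tailP_atBot hmX).comp hneg
  -- upper bound
  have hUg : Tendsto (fun x => (tailP μ X ((1 - δ) * x) / (ℓ x * x ^ (-α)) +
      tailP μ Y ((1 - δ) * x) / (ℓ x * x ^ (-α)) +
      tailP μ X (δ * x) * (tailP μ Y (δ * x) / (ℓ x * x ^ (-α)))) / (a + b)) atTop
      (𝓝 ((a * (1 - δ) ^ (-α) + b * (1 - δ) ^ (-α) + 0 * (b * δ ^ (-α))) / (a + b))) :=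
    ((hXu.add hYu).add (hX0.mul hY3)).div_const _
  have hval : (a * (1 - δ) ^ (-α) + b * (1 - δ) ^ (-α) + 0 * (b * δ ^ (-α))) / (a + b)
      = (1 - δ) ^ (-α) := by
    field_simp
    ring
  rw [hval] at hUg
  have hUev := hUg.eventually_lt_const (show (1 - δ) ^ (-α) < 1 + e by linarith)
  have hupper : ∀ᶠ x in atTop,
      tailP μ (fun ω => X ω + Y ω) x / ((a + b) * (ℓ x * x ^ (-α))) < 1 + e := by
    filter_upwards [hUev, g_pos (α := α) hℓ] with x hU hgx
    have hD : 0 < (a + b) * (ℓ x * x ^ (-α)) := mul_pos hab hgx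
    calc tailP μ (fun ω => X ω + Y ω) x / ((a + b) * (ℓ x * x ^ (-α)))
        ≤ (tailP μ X ((1 - δ) * x) + tailP μ Y ((1 - δ) * x) +
            tailP μ X (δ * x) * tailP μ Y (δ * x)) / ((a + b) * (ℓ x * x ^ (-α))) := by
          exact div_le_div_of_nonneg_right (tail_add_upper hmX hmY hind x hδ0) hD.le
      _ = (tailP μ X ((1 - δ) * x) / (ℓ x * x ^ (-α)) +
            tailP μ Y ((1 - δ) * x) / (ℓ x * x ^ (-α)) +
            tailP μ X (δ * x) * (tailP μ Y (δ * x) / (ℓ x * x ^ (-α)))) / (a + b) :=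
          alg_up hgx.ne' hab.ne'
      _ < 1 + e := hU
  -- lower bound
  have hLg : Tendsto (fun x => ((tailP μ X ((1 + δ) * x) / (ℓ x * x ^ (-α))) *
      tailP μ Y (-(δ * x)) + (tailP μ Y ((1 + δ) * x) / (ℓ x * x ^ (-α))) *
      tailP μ X (-(δ * x)) - tailP μ X ((1 + δ) * x) *
      (tailP μ Y ((1 + δ) * x) / (ℓ x * x ^ (-α)))) / (a + b)) atTop
      (𝓝 ((a * (1 + δ) ^ (-α) * 1 + b * (1 + δ) ^ (-α) * 1 - 0 * (b * (1 + δ) ^ (-α))) /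
        (a + b))) :=
    (((hXl.mul hYneg).add (hYl.mul hXneg)).sub (hX0'.mul hYl)).div_const _
  have hlval : (a * (1 + δ) ^ (-α) * 1 + b * (1 + δ) ^ (-α) * 1 - 0 * (b * (1 + δ) ^ (-α))) /
      (a + b) = (1 + δ) ^ (-α) := by
    field_simp
    ring
  rw [hlval] at hLg
  have hLev := hLg.eventually_const_lt (show 1 - e < (1 + δ) ^ (-α) by linarith)
  have hlower : ∀ᶠ x in atTop,
      1 - e < tailP μ (fun ω => X ω + Y ω) x / ((a + b) * (ℓ x * x ^ (-α))) := by
    filter_upwards [hLev, g_pos (α := α) hℓ] with x hL hgx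
    have hD : 0 < (a + b) * (ℓ x * x ^ (-α)) := mul_pos hab hgx
    calc (1 : ℝ) - e
        < ((tailP μ X ((1 + δ) * x) / (ℓ x * x ^ (-α))) * tailP μ Y (-(δ * x)) +
            (tailP μ Y ((1 + δ) * x) / (ℓ x * x ^ (-α))) * tailP μ X (-(δ * x)) -
            tailP μ X ((1 + δ) * x) *
              (tailP μ Y ((1 + δ) * x) / (ℓ x * x ^ (-α)))) / (a + b) := hL
      _ = (tailP μ X ((1 + δ) * x) * tailP μ Y (-(δ * x)) +
            tailP μ Y ((1 + δ) * x) * tailP μ X (-(δ * x)) -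
            tailP μ X ((1 + δ) * x) * tailP μ Y ((1 + δ) * x)) /
            ((a + b) * (ℓ x * x ^ (-α))) :=
          alg_lo hgx.ne' hab.ne'
      _ ≤ tailP μ (fun ω => X ω + Y ω) x / ((a + b) * (ℓ x * x ^ (-α))) := by
          exact div_le_div_of_nonneg_right (tail_add_lower hmX hmY hind x hδ0) hD.le
  filter_upwards [hupper, hlower] with x h1 h2
  rw [Real.dist_eq, abs_lt]
  constructor <;> linarith

end TwoVar

section SumLemma

variable {ℓ : ℝ → ℝ} {α : ℝ}

lemma tail_sum {V : Type*} [DecidableEq V] {Ω : Type*} [MeasurableSpace Ω] {μ : Measure Ω}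
    [IsProbabilityMeasure μ] (hα : 0 < α) (hℓ : SlowlyVarying ℓ)
    (ε : V → Ω → ℝ) (hmeas : ∀ j, Measurable (ε j))
    (hindep : iIndepFun ε μ)
    (htail : ∀ j, Asymp (tailP μ (ε j)) (fun x => ℓ x * x ^ (-α)))
    (c : V → ℝ) (A : Finset V) (hne : A.Nonempty) (hc : ∀ h ∈ A, 0 < c h) :
    Asymp (tailP μ (fun ω => ∑ h ∈ A, c h * ε h ω))
      (fun x => (∑ h ∈ A, c h ^ α) * (ℓ x * x ^ (-α))) := by
  revert hc
  induction hne using Finset.Nonempty.cons_induction with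
  | singleton a =>
    intro hc
    simp only [Finset.sum_singleton]
    exact tail_const_smul hℓ (htail a) (hc a (Finset.mem_singleton_self a))
  | cons a s ha hs ih =>
    intro hc
    have hca : 0 < c a := hc a (Finset.mem_cons_self a s)
    have hcs : ∀ h ∈ s, 0 < c h := fun h hh => hc h (Finset.mem_cons_of_mem hh)
    have IH := ih hcs
    have hfam : iIndepFun (fun h ω => c h * ε h ω) μ :=
      hindep.comp (fun h y => c h * y) (fun h => measurable_const_mul (c h))
    have hind0 : IndepFun (∑ h ∈ s, (fun (h : V) ω => c h * ε h ω) h)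
        ((fun (h : V) ω => c h * ε h ω) a) μ :=
      hfam.indepFun_finsetSum_of_notMem (fun h => (hmeas h).const_mul (c h)) ha
    have hsum_eq : (∑ h ∈ s, (fun (h : V) ω => c h * ε h ω) h)
        = fun ω => ∑ h ∈ s, c h * ε h ω := by
      funext ω
      simp [Finset.sum_apply]
    have hind : IndepFun (fun ω => c a * ε a ω) (fun ω => ∑ h ∈ s, c h * ε h ω) μ := by
      rw [hsum_eq] at hind0
      exact hind0.symm
    have hXa : Asymp (tailP μ (fun ω => c a * ε a ω))
        (fun x => (c a) ^ α * (ℓ x * x ^ (-α))) := tail_const_smul hℓ (htail a) hca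
    have hbpos : 0 < ∑ h ∈ s, c h ^ α :=
      Finset.sum_pos (fun h hh => Real.rpow_pos_of_pos (hcs h hh) _) hs
    have hapos : 0 < (c a) ^ α := Real.rpow_pos_of_pos hca _
    have hmsum : Measurable (fun ω => ∑ h ∈ s, c h * ε h ω) :=
      Finset.measurable_sum s (fun h _ => (hmeas h).const_mul (c h))
    have h := tail_add ((hmeas a).const_mul (c a)) hmsum hind hℓ hα hapos hbpos hXa IH
    simp only [Finset.sum_cons]
    exact h

end SumLemma

theorem scm_variable_tail
    {V : Type*} [Fintype V] [DecidableEq V]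
    -- the ancestor sets of the DAG (`An j` contains `j` itself)
    (An : V → Finset V) (hAself : ∀ j, j ∈ An j)
    (hATrans : ∀ j, ∀ h ∈ An j, An h ⊆ An j)
    (hAAcyclic : ∀ j h, h ∈ An j → j ∈ An h → h = j)
    -- the path coefficients: `B h j` is the sum of weighted directed paths from `h` to `j`
    (B : V → V → ℝ) (hBpos : ∀ j, ∀ h ∈ An j, 0 < B h j) (hBself : ∀ j, B j j = 1)
    -- the probability space and the independent regularly varying noise variables
    {Ω : Type*} [MeasurableSpace Ω] (μ : Measure Ω) [IsProbabilityMeasure μ]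
    (ε : V → Ω → ℝ) (hmeas : ∀ j, Measurable (ε j))
    (hindep : iIndepFun ε μ)
    (α : ℝ) (hα : 0 < α) (ℓ : ℝ → ℝ) (hℓ : SlowlyVarying ℓ)
    (htail : ∀ j, Asymp (tailP μ (ε j)) (fun x => ℓ x * x ^ (-α)))
    -- the variables of the SCM, written as weighted sums of ancestral noises
    (X : V → Ω → ℝ) (hX : ∀ j ω, X j ω = ∑ h ∈ An j, B h j * ε h ω)
    (j : V) :
    Asymp (tailP μ (X j)) (fun x => (∑ h ∈ An j, B h j ^ α) * ℓ x * x ^ (-α)) := by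
  have hXe : X j = fun ω => ∑ h ∈ An j, B h j * ε h ω := funext (hX j)
  have h := tail_sum hα hℓ ε hmeas hindep htail (fun h => B h j) (An j)
    ⟨j, hAself j⟩ (fun h hh => hBpos j h hh)
  rw [hXe]
  have heq : (fun x => (∑ h ∈ An j, B h j ^ α) * ℓ x * x ^ (-α))
      = fun x => (∑ h ∈ An j, B h j ^ α) * (ℓ x * x ^ (-α)) :=
    funext fun x => mul_assoc _ _ _
  rw [heq]
  exact h
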